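/- Let H be a real Hilbert space and K_1, ..., K_N closed subspaces with H = K_1 + ... + K_N and P_i the orthogonal projection onto K_i. Assume (SD): there is C_A > 0 such that every v ∈ H can be written v = Σ_{i=1}^N v_i with v_i ∈ K_i and Σ_{i=1}^N ||v_i||² ≤ C_A ||v||²; and (SCS): there is C_S > 0 such that for all u_i ∈ K_i and v_j ∈ K_j, Σ_{i=1}^N Σ_{j=i+1}^N (u_i, v_j) ≤ C_S^{1/2} (Σ_{i=1}^N ||u_i||²)^{1/2} (Σ_{j=1}^N ||v_j||²)^{1/2}. Then || (I - P_N)(I - P_{N-1}) ··· (I - P_1) ||² ≤ 1 - 1/(1 + C_A C_S). -/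

import Mathlib

open RealInnerProductSpace

/-- Auxiliary sequence for the successive subspace correction iteration:
`sscSeq P' v k = (I - P'_{k-1}) ⋯ (I - P'_0) v`. -/
def sscSeq {H : Type*} [NormedAddCommGroup H] [InnerProductSpace ℝ H]
    (P' : ℕ → H →L[ℝ] H) (v : H) : ℕ → H
  | 0 => v
  | (k+1) => sscSeq P' v k - P' k (sscSeq P' v k)

private lemma ssc_sq_aux {t p s : ℝ} (h : t ^ 2 ≤ p * t * s) : t ^ 2 ≤ p ^ 2 * s ^ 2 := by
  nlinarith [sq_nonneg (p * s - t)]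

private lemma ssc_alg_aux {x y c : ℝ} (h1 : 0 < 1 + c) (h : x ≤ c * (y - x)) :
    x ≤ (1 - 1 / (1 + c)) * y := by
  have hc : (1 : ℝ) - 1 / (1 + c) = c / (1 + c) := by field_simp; ring
  rw [hc, div_mul_eq_mul_div, le_div_iff₀ h1]
  nlinarith

/-- Under (SD) and (SCS) for `H = K_1 + ⋯ + K_N`, the error propagation operator
of the successive subspace correction method satisfies
`‖(I - P_N) ⋯ (I - P_1)‖² ≤ 1 - 1/(1 + C_A C_S)`. -/
theorem ssc_convergence_rate
    {H : Type*} [NormedAddCommGroup H] [InnerProductSpace ℝ H] [CompleteSpace H]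
    (N : ℕ) (K : Fin N → Submodule ℝ H) (hK : ∀ i, IsClosed ((K i : Set H)))
    (P : Fin N → H →L[ℝ] H)
    (hPmem : ∀ i x, P i x ∈ K i)
    (hPid : ∀ i, ∀ x ∈ K i, P i x = x)
    (hPsym : ∀ i x y, ⟪P i x, y⟫ = ⟪x, P i y⟫)
    (CA : ℝ) (hCA : 0 < CA)
    (hSD : ∀ v : H, ∃ w : Fin N → H, (∀ i, w i ∈ K i) ∧ ∑ i, w i = v ∧
      ∑ i, ‖w i‖ ^ 2 ≤ CA * ‖v‖ ^ 2)
    (CS : ℝ) (hCS : 0 < CS)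
    (hSCS : ∀ u v : Fin N → H, (∀ i, u i ∈ K i) → (∀ j, v j ∈ K j) →
      ∑ i, ∑ j ∈ Finset.Ioi i, ⟪u i, v j⟫ ≤
        Real.sqrt CS * Real.sqrt (∑ i, ‖u i‖ ^ 2) * Real.sqrt (∑ j, ‖v j‖ ^ 2)) :
    ‖(List.ofFn (fun i : Fin N => (1 : H →L[ℝ] H) - P i)).reverse.prod‖ ^ 2
      ≤ 1 - 1 / (1 + CA * CS) := by
  set F : Fin N → H →L[ℝ] H := fun i => (1 : H →L[ℝ] H) - P i with hF
  set T : H →L[ℝ] H := (List.ofFn F).reverse.prod with hT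
  have h1p : (0:ℝ) < 1 + CA * CS := by positivity
  have hc0 : (0:ℝ) ≤ 1 - 1 / (1 + CA * CS) := by
    have : 1 / (1 + CA * CS) ≤ 1 := by
      rw [div_le_one h1p]; nlinarith
    linarith
  -- pointwise bound
  have key : ∀ v : H, ‖T v‖ ^ 2 ≤ (1 - 1 / (1 + CA * CS)) * ‖v‖ ^ 2 := by
    intro v
    set P' : ℕ → H →L[ℝ] H := fun k => if h : k < N then P ⟨k, h⟩ else 0 with hP'
    set g : ℕ → H := sscSeq P' v with hg
    set u : ℕ → H := fun k => P' k (g k) with hu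
    have hg0 : g 0 = v := rfl
    have hgs : ∀ k, g (k+1) = g k - u k := fun k => rfl
    have hP'lt : ∀ (k : ℕ) (h : k < N), P' k = P ⟨k, h⟩ := by
      intro k h; simp [hP', dif_pos h]
    -- u k lies in K k for k < N
    have humem : ∀ (k : ℕ) (h : k < N), u k ∈ K ⟨k, h⟩ := by
      intro k h
      simp only [hu, hP'lt k h]
      exact hPmem _ _
    -- norm decrease at each step
    have hstep : ∀ (k : ℕ), k < N → ‖g (k+1)‖ ^ 2 = ‖g k‖ ^ 2 - ‖u k‖ ^ 2 := by
      intro k hk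
      have hself : ⟪g k, u k⟫ = ‖u k‖ ^ 2 := by
        have h1 : ⟪P ⟨k, hk⟩ (u k), g k⟫ = ⟪u k, g k⟫ := by
          rw [hPid ⟨k, hk⟩ (u k) (humem k hk)]
        have h2 : ⟪P ⟨k, hk⟩ (u k), g k⟫ = ⟪u k, P ⟨k, hk⟩ (g k)⟫ := hPsym _ _ _
        have h3 : u k = P ⟨k, hk⟩ (g k) := by simp [hu, hP'lt k hk]
        calc ⟪g k, u k⟫ = ⟪u k, g k⟫ := real_inner_comm _ _
          _ = ⟪u k, P ⟨k, hk⟩ (g k)⟫ := by rw [← h1, h2]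
          _ = ⟪u k, u k⟫ := by rw [← h3]
          _ = ‖u k‖ ^ 2 := real_inner_self_eq_norm_sq _
      rw [hgs k, norm_sub_sq_real, hself]; ring
    -- telescoping of norms
    have htel : ∀ n, n ≤ N → ∑ k ∈ Finset.range n, ‖u k‖ ^ 2 = ‖v‖ ^ 2 - ‖g n‖ ^ 2 := by
      intro n hn
      induction n with
      | zero => simp [hg0]
      | succ m ih =>
        rw [Finset.sum_range_succ, ih (Nat.le_of_succ_le hn), hstep m hn]
        ring
    -- telescoping of vectors
    have hvtel : ∀ m n, m ≤ n → g m = g n + ∑ k ∈ Finset.Ico m n, u k := by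
      intro m n hmn
      induction n, hmn using Nat.le_induction with
      | base => simp
      | succ n hmn ih =>
        rw [Finset.sum_Ico_succ_top hmn, hgs n, ih]
        abel
    -- orthogonality: for x ∈ K i, ⟪x, g (i+1)⟫ = 0
    have horth : ∀ (i : Fin N), ∀ x ∈ K i, ⟪x, g (i.val + 1)⟫ = 0 := by
      intro i x hx
      have h3 : u i.val = P i (g i.val) := by
        rw [hu]; simp only [hP'lt i.val i.isLt, Fin.eta]
      rw [hgs i.val, inner_sub_right, h3, ← hPsym i x (g i.val), hPid i x hx, sub_self]
    -- identification of T v with g N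
    have hTv : T v = g N := by
      have take_prod : ∀ n, n ≤ N →
          (((List.ofFn F).take n).reverse.prod : H →L[ℝ] H) v = g n := by
        intro n hn
        induction n with
        | zero => simp [hg0]
        | succ m ih =>
          have hm : m < (List.ofFn F).length := by
            rw [List.length_ofFn]; omega
          have : (List.ofFn F).take (m+1) = (List.ofFn F).take m ++ [(List.ofFn F)[m]] := by
            rw [List.take_succ, List.getElem?_eq_getElem hm]
            rfl
          rw [this, List.reverse_append, List.reverse_singleton, List.singleton_append,
            List.prod_cons]
          have hgetm : (List.ofFn F)[m] = F ⟨m, by omega⟩ := List.getElem_ofFn hm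
          rw [hgetm]
          have hmN : m < N := by omega
          show (F ⟨m, hmN⟩) ((((List.ofFn F).take m).reverse.prod : H →L[ℝ] H) v) = g (m+1)
          rw [ih (Nat.le_of_succ_le hn)]
          have : u m = P ⟨m, hmN⟩ (g m) := by simp [hu, hP'lt m hmN]
          simp only [hF, ContinuousLinearMap.sub_apply, ContinuousLinearMap.one_apply,
            hgs m, this]
      have hlen : (List.ofFn F).length = N := List.length_ofFn
      have := take_prod N le_rfl
      rwa [List.take_of_length_le (le_of_eq hlen)] at this
    -- main estimate
    set e : H := g N with he
    obtain ⟨w, hwmem, hwsum, hwbound⟩ := hSD e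
    -- e² as a double sum
    have hB : ∑ j : Fin N, ‖u j.val‖ ^ 2 = ‖v‖ ^ 2 - ‖e‖ ^ 2 := by
      rw [Fin.sum_univ_eq_sum_range (fun k => ‖u k‖ ^ 2) N]
      exact htel N le_rfl
    have hB0 : (0:ℝ) ≤ ‖v‖ ^ 2 - ‖e‖ ^ 2 := by
      rw [← hB]; positivity
    have hinner : ∀ i : Fin N, ⟪w i, e⟫ = ∑ j ∈ Finset.Ioi i, ⟪-(w i), u j.val⟫ := by
      intro i
      have h1 : g (i.val + 1) = e + ∑ k ∈ Finset.Ico (i.val + 1) N, u k :=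
        hvtel (i.val + 1) N i.isLt
      have h2 : (0:ℝ) = ⟪w i, e⟫ + ∑ k ∈ Finset.Ico (i.val + 1) N, ⟪w i, u k⟫ := by
        rw [← inner_sum, ← inner_add_right, ← h1]
        exact (horth i (w i) (hwmem i)).symm
      have hset : Finset.Ico (i.val + 1) N = (Finset.Ioi i).map Fin.valEmbedding := by
        rw [Fin.map_valEmbedding_Ioi]
        ext k
        simp only [Finset.mem_Ioc, Finset.mem_Ioo, Finset.mem_Ico]
        have := i.isLt
        omega
      have h3 : ∑ j ∈ Finset.Ioi i, ⟪w i, u j.val⟫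
          = ∑ k ∈ Finset.Ico (i.val + 1) N, ⟪w i, u k⟫ := by
        rw [hset, Finset.sum_map]
        simp only [Fin.valEmbedding_apply]
      simp only [inner_neg_left, Finset.sum_neg_distrib, ← h3] at h2 ⊢
      linarith
    have hesq : ‖e‖ ^ 2 = ∑ i, ∑ j ∈ Finset.Ioi i, ⟪-(w i), u j.val⟫ := by
      have : ‖e‖ ^ 2 = ∑ i, ⟪w i, e⟫ := by
        rw [← sum_inner, hwsum, real_inner_self_eq_norm_sq]
      rw [this]
      exact Finset.sum_congr rfl fun i _ => hinner i
    -- apply SCS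
    have hApp := hSCS (fun i => -(w i)) (fun j => u j.val)
      (fun i => (K i).neg_mem (hwmem i))
      (fun j => by simpa [Fin.eta] using humem j.val j.isLt)
    have hesq2 : ‖e‖ ^ 2 ≤ Real.sqrt CS * Real.sqrt (∑ i, ‖w i‖ ^ 2)
        * Real.sqrt (∑ j : Fin N, ‖u j.val‖ ^ 2) := by
      rw [hesq]
      simpa [norm_neg] using hApp
    -- bound the sqrt factors
    have hA : Real.sqrt (∑ i, ‖w i‖ ^ 2) ≤ Real.sqrt CA * ‖e‖ := by
      have h1 : Real.sqrt (∑ i, ‖w i‖ ^ 2) ≤ Real.sqrt (CA * ‖e‖ ^ 2) :=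
        Real.sqrt_le_sqrt hwbound
      rwa [Real.sqrt_mul hCA.le, Real.sqrt_sq (norm_nonneg _)] at h1
    set s : ℝ := Real.sqrt (∑ j : Fin N, ‖u j.val‖ ^ 2) with hs
    have hs0 : 0 ≤ s := Real.sqrt_nonneg _
    have hs2 : s ^ 2 = ‖v‖ ^ 2 - ‖e‖ ^ 2 := by
      rw [hs, Real.sq_sqrt (by rw [hB]; exact hB0)]; exact hB
    have hesq3 : ‖e‖ ^ 2 ≤ Real.sqrt CS * (Real.sqrt CA * ‖e‖) * s := by
      refine le_trans hesq2 ?_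
      exact mul_le_mul_of_nonneg_right
        (mul_le_mul_of_nonneg_left hA (Real.sqrt_nonneg CS)) hs0
    -- conclude ‖e‖² ≤ CA·CS·(‖v‖² − ‖e‖²)
    have hCAs : Real.sqrt CA ^ 2 = CA := Real.sq_sqrt hCA.le
    have hCSs : Real.sqrt CS ^ 2 = CS := Real.sq_sqrt hCS.le
    have hesq4 : ‖e‖ ^ 2 ≤ (Real.sqrt CS * Real.sqrt CA) * ‖e‖ * s := by
      have : Real.sqrt CS * (Real.sqrt CA * ‖e‖) * s
          = (Real.sqrt CS * Real.sqrt CA) * ‖e‖ * s := by ring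
      linarith [hesq3]
    have hfin' : ‖e‖ ^ 2 ≤ (Real.sqrt CS * Real.sqrt CA) ^ 2 * s ^ 2 := ssc_sq_aux hesq4
    have hfin : ‖e‖ ^ 2 ≤ CA * CS * (‖v‖ ^ 2 - ‖e‖ ^ 2) := by
      have hq : (Real.sqrt CS * Real.sqrt CA) ^ 2 * s ^ 2
          = CA * CS * (‖v‖ ^ 2 - ‖e‖ ^ 2) := by
        rw [mul_pow, hCSs, hCAs, hs2]; ring
      linarith
    -- final algebra
    rw [hTv]
    exact ssc_alg_aux h1p hfin
  -- from the pointwise bound to the operator-norm bound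
  have hnorm : ‖T‖ ≤ Real.sqrt (1 - 1 / (1 + CA * CS)) := by
    refine T.opNorm_le_bound (Real.sqrt_nonneg _) fun v => ?_
    have h1 := key v
    have h2 : ‖T v‖ = Real.sqrt (‖T v‖ ^ 2) := (Real.sqrt_sq (norm_nonneg _)).symm
    rw [h2]
    calc Real.sqrt (‖T v‖ ^ 2) ≤ Real.sqrt ((1 - 1 / (1 + CA * CS)) * ‖v‖ ^ 2) :=
          Real.sqrt_le_sqrt h1
      _ = Real.sqrt (1 - 1 / (1 + CA * CS)) * ‖v‖ := by
          rw [Real.sqrt_mul hc0, Real.sqrt_sq (norm_nonneg _)]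
  calc ‖T‖ ^ 2 ≤ Real.sqrt (1 - 1 / (1 + CA * CS)) ^ 2 :=
        pow_le_pow_left₀ (norm_nonneg _) hnorm 2
    _ = 1 - 1 / (1 + CA * CS) := Real.sq_sqrt hc0
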